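/- In the MISO case (N_r = 1), given a positive semidefinite prediction error covariance matrix P ∈ ℂ^{N_t×N_t} and σ², ρ > 0, the vector s with ‖s‖² = ρ maximizing (s^H P² s)/(s^H P s + σ²) is s = √ρ u₁, where u₁ is a unit eigenvector of P corresponding to its largest eigenvalue; the maximum value is ρλ₁²/(ρλ₁ + σ²) where λ₁ is the largest eigenvalue of P. -/

import Mathlib

open Matrix ComplexOrder

/-- MISO case: over vectors `s` with `‖s‖² = ρ`, the Rayleigh-type
ratio `(sᴴP²s)/(sᴴPs+σ²)` is maximized by `s = √ρ u₁` with `u₁` a unit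
eigenvector for the largest eigenvalue `λ₁` of `P`, with maximum
`ρλ₁²/(ρλ₁+σ²)`. -/
theorem stmt5 {Nt : ℕ} (P : Matrix (Fin Nt) (Fin Nt) ℂ) (hP : P.PosSemidef)
    (ρ σ2 : ℝ) (hρ : 0 < ρ) (hσ : 0 < σ2)
    (lam1 : ℝ) (u : Fin Nt → ℂ)
    (hu_norm : star u ⬝ᵥ u = 1)
    (hu_eig : P *ᵥ u = (lam1 : ℂ) • u)
    (hmax : ∀ x : Fin Nt → ℂ, (star x ⬝ᵥ (P *ᵥ x)).re ≤ lam1 * (star x ⬝ᵥ x).re) :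
    (∀ s : Fin Nt → ℂ, star s ⬝ᵥ s = (ρ : ℂ) →
        (star s ⬝ᵥ (P *ᵥ (P *ᵥ s))).re / ((star s ⬝ᵥ (P *ᵥ s)).re + σ2) ≤
          ρ * lam1 ^ 2 / (ρ * lam1 + σ2)) ∧
    (star ((Real.sqrt ρ : ℂ) • u) ⬝ᵥ (P *ᵥ (P *ᵥ ((Real.sqrt ρ : ℂ) • u)))).re /
        ((star ((Real.sqrt ρ : ℂ) • u) ⬝ᵥ (P *ᵥ ((Real.sqrt ρ : ℂ) • u))).re + σ2) =
      ρ * lam1 ^ 2 / (ρ * lam1 + σ2) := by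
  have hlam1 : 0 ≤ lam1 := by
    have h0 := hP.dotProduct_mulVec_nonneg u
    have : star u ⬝ᵥ (P *ᵥ u) = (lam1 : ℂ) := by
      rw [hu_eig, dotProduct_smul, hu_norm]; simp
    rw [this] at h0
    exact_mod_cast h0
  open scoped MatrixOrder in set Q := CFC.sqrt P with hQdef
  open scoped MatrixOrder in have hQH : Qᴴ = Q := (CFC.sqrt_nonneg P).posSemidef.1
  open scoped MatrixOrder in have hQQ : Q * Q = P := CFC.sqrt_mul_sqrt_self P hP.nonneg
  have key : ∀ s : Fin Nt → ℂ,
      (star s ⬝ᵥ (P *ᵥ (P *ᵥ s))).re ≤ lam1 * (star s ⬝ᵥ (P *ᵥ s)).re := by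
    intro s
    have h1 := hmax (Q *ᵥ s)
    have e1 : star (Q *ᵥ s) ⬝ᵥ (P *ᵥ (Q *ᵥ s)) = star s ⬝ᵥ (P *ᵥ (P *ᵥ s)) := by
      rw [star_mulVec, hQH, ← dotProduct_mulVec]
      simp only [mulVec_mulVec]
      congr 2
      rw [← hQQ]
      noncomm_ring
    have e2 : star (Q *ᵥ s) ⬝ᵥ (Q *ᵥ s) = star s ⬝ᵥ (P *ᵥ s) := by
      rw [star_mulVec, hQH, ← dotProduct_mulVec, mulVec_mulVec, hQQ]
    rw [e1, e2] at h1
    exact h1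
  constructor
  · intro s hs
    have ha0 : 0 ≤ (star s ⬝ᵥ (P *ᵥ s)).re := by
      have := hP.dotProduct_mulVec_nonneg s
      rw [Complex.le_def] at this
      simpa using this.1
    have hale : (star s ⬝ᵥ (P *ᵥ s)).re ≤ lam1 * ρ := by
      have := hmax s
      rw [hs] at this
      simpa using this
    have hb := key s
    rw [div_le_div_iff₀ (by linarith) (by nlinarith)]
    nlinarith [mul_nonneg (sub_nonneg.mpr hb) (show (0:ℝ) ≤ ρ * lam1 + σ2 by nlinarith),
      mul_nonneg (mul_nonneg hσ.le hlam1) (sub_nonneg.mpr hale)]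
  · have hc : (starRingEnd ℂ) ((Real.sqrt ρ : ℝ) : ℂ) * ((Real.sqrt ρ : ℝ) : ℂ) = (ρ : ℂ) := by
      rw [Complex.conj_ofReal, ← Complex.ofReal_mul, Real.mul_self_sqrt hρ.le]
    have e3 : star ((Real.sqrt ρ : ℂ) • u) ⬝ᵥ (P *ᵥ (P *ᵥ ((Real.sqrt ρ : ℂ) • u)))
        = ((ρ * lam1 ^ 2 : ℝ) : ℂ) := by
      rw [mulVec_smul, hu_eig, mulVec_smul, mulVec_smul, hu_eig]
      simp only [star_smul, smul_dotProduct, dotProduct_smul, hu_norm, smul_eq_mul, mul_one,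
        Complex.star_def]
      push_cast
      rw [← hc]
      ring
    have e4 : star ((Real.sqrt ρ : ℂ) • u) ⬝ᵥ (P *ᵥ ((Real.sqrt ρ : ℂ) • u))
        = ((ρ * lam1 : ℝ) : ℂ) := by
      rw [mulVec_smul, hu_eig]
      simp only [star_smul, smul_dotProduct, dotProduct_smul, hu_norm, smul_eq_mul, mul_one,
        Complex.star_def]
      push_cast
      rw [← hc]
      ring
    rw [e3, e4, Complex.ofReal_re, Complex.ofReal_re]
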